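/- Let 2 ≤ d_1 < d_2 < ... < d_r be integers, and let z = \sum_{n≥0} a_n x^{n+1} be the compositional inverse of x = z - \sum_{i=1}^{r} z^{d_i}. Then a_n = \sum_{λ} (1/(n+1)) * binomial(n+k, k) * multinomial(k; k_{d_1-1},...,k_{d_r-1}), where the sum is over all tuples (k_{d_1-1},...,k_{d_r-1}) of nonnegative integers with \sum_i (d_i - 1) k_{d_i-1} = n, and k = \sum_i k_{d_i-1}. -/

import Mathlib

open PowerSeries

open Finset

/-- The series `z = ∑_{n≥0} a_n x^{n+1}`. -/
noncomputable def coeffSeries (a : ℕ → ℚ) : PowerSeries ℚ :=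
  PowerSeries.mk fun m => if m = 0 then 0 else a (m - 1)

lemma geo_step (f g : ℕ → ℚ) (h0 : g 0 = f 0) (hs : ∀ k, g (k+1) = f (k+1) - f k) :
    (1 - X : ℚ⟦X⟧) * PowerSeries.mk f = PowerSeries.mk g := by
  ext k
  cases k with
  | zero => simp [h0]
  | succ k => simp [sub_mul, coeff_succ_X_mul, hs]

lemma geo_pow : ∀ n : ℕ, (1 - X : ℚ⟦X⟧) ^ (n+1) * PowerSeries.mk (fun k => ((n+k).choose k : ℚ)) = 1 := by
  intro n
  induction n with
  | zero =>
      rw [pow_one, geo_step _ (fun k => if k = 0 then 1 else 0)]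
      · ext k; cases k <;> simp
      · simp
      · intro k; simp
  | succ n ih =>
      rw [pow_succ, mul_assoc, geo_step _ (fun k => ((n+k).choose k : ℚ)), ih]
      · simp
      · intro k
        have h2 : (n + (k+1)).choose (k+1) + (n+1+k).choose k = (n+1+(k+1)).choose (k+1) := by
          rw [show n+(k+1) = n+1+k by ring, show n+1+(k+1) = (n+1+k)+1 by ring,
            Nat.choose_succ_succ]
          simp [Nat.succ_eq_add_one]; omega
        rw [eq_sub_iff_add_eq]
        exact_mod_cast h2

lemma inv_deriv (E Ei : ℚ⟦X⟧) (h : E * Ei = 1) :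
    d⁄dX ℚ Ei = -(Ei^2 * d⁄dX ℚ E) := by
  have h1 : E * d⁄dX ℚ Ei + Ei * d⁄dX ℚ E = 0 := by
    have := congrArg (d⁄dX ℚ) h
    rwa [Derivation.leibniz, Derivation.map_one_eq_zero, smul_eq_mul, smul_eq_mul] at this
  have h2 : E * d⁄dX ℚ Ei = -(Ei * d⁄dX ℚ E) := by linear_combination h1
  calc d⁄dX ℚ Ei = Ei * E * d⁄dX ℚ Ei := by rw [mul_comm Ei E, h, one_mul]
  _ = Ei * (E * d⁄dX ℚ Ei) := by ring
  _ = Ei * (-(Ei * d⁄dX ℚ E)) := by rw [h2]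
  _ = -(Ei^2 * d⁄dX ℚ E) := by ring

lemma res_lemma (E Ei : ℚ⟦X⟧) (h : E * Ei = 1) (j : ℕ) :
    coeff (j+1) (Ei ^ (j+1)) + coeff j (d⁄dX ℚ E * Ei ^ (j+2)) = 0 := by
  have e2 : d⁄dX ℚ (Ei^(j+1)) = -(((j+1 : ℕ) : ℚ⟦X⟧) * (d⁄dX ℚ E * Ei^(j+2))) := by
    rw [Derivation.leibniz_pow, inv_deriv E Ei h]
    simp only [smul_eq_mul, nsmul_eq_mul, Nat.add_sub_cancel]
    ring
  have e1 : coeff (j+1) (Ei^(j+1)) * ((j:ℚ)+1) = coeff j (d⁄dX ℚ (Ei^(j+1))) := by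
    rw [coeff_derivative]
  rw [e2] at e1
  have e3 : ((j+1:ℕ) : ℚ⟦X⟧) = C ((j+1:ℕ) : ℚ) := (map_natCast (C (R := ℚ)) (j+1)).symm
  rw [e3, map_neg, coeff_C_mul] at e1
  have hj : ((j:ℚ)+1) ≠ 0 := by positivity
  have hjj : ((j+1:ℕ):ℚ) = (j:ℚ)+1 := by push_cast; ring
  rw [hjj] at e1
  have e4 : coeff (j+1) (Ei^(j+1)) * ((j:ℚ)+1)
      = (-(coeff j (d⁄dX ℚ E * Ei^(j+2)))) * ((j:ℚ)+1) := by linear_combination e1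
  have := mul_right_cancel₀ hj e4
  linarith

lemma stepA (E Ei : ℚ⟦X⟧) (h : E * Ei = 1) (n m : ℕ) (hm : m ≤ n) :
    coeff n ((X*E)^m * Ei^(n+1) * d⁄dX ℚ (X*E)) = if m = n then 1 else 0 := by
  have hdF : d⁄dX ℚ (X*E) = E + X * d⁄dX ℚ E := by
    rw [Derivation.leibniz]; simp only [smul_eq_mul, derivative_X, mul_one]; ring
  have hEpow : ∀ a b : ℕ, E^a * Ei^(a+b) = Ei^b := by
    intro a b; rw [pow_add, ← mul_assoc, ← mul_pow, h, one_pow, one_mul]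
  rcases eq_or_lt_of_le hm with rfl | hlt
  · have e1 : E^(m+1) * Ei^(m+1) = 1 := by
      have := hEpow (m+1) 0; simpa using this
    have key : (X*E)^m * Ei^(m+1) * d⁄dX ℚ (X*E)
        = X^m * 1 + X^(m+1) * (d⁄dX ℚ E * (E^m * Ei^(m+1))) := by
      rw [hdF, mul_pow, ← e1]; ring
    rw [key, map_add, if_pos rfl]
    have c1 : coeff m ((X:ℚ⟦X⟧)^m * 1) = 1 := by
      rw [mul_one, coeff_X_pow]; simp
    have c2 : coeff m (X^(m+1) * (d⁄dX ℚ E * (E^m * Ei^(m+1)))) = 0 := by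
      rw [coeff_X_pow_mul', if_neg (by omega)]
    rw [c1, c2, add_zero]
  · obtain ⟨j, hj⟩ : ∃ j, n = m + (j+1) := ⟨n - m - 1, by omega⟩
    have e1 : E^(m+1) * Ei^(n+1) = Ei^(j+1) := by
      rw [show n+1 = (m+1)+(j+1) from by omega]; exact hEpow _ _
    have e2 : E^m * Ei^(n+1) = Ei^(j+2) := by
      rw [show n+1 = m+(j+2) from by omega]; exact hEpow _ _
    have key : (X*E)^m * Ei^(n+1) * d⁄dX ℚ (X*E)
        = X^m * Ei^(j+1) + X^(m+1) * (d⁄dX ℚ E * Ei^(j+2)) := by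
      calc (X*E)^m * Ei^(n+1) * d⁄dX ℚ (X*E)
          = X^m * (E^(m+1) * Ei^(n+1)) + X^(m+1) * (d⁄dX ℚ E * (E^m * Ei^(n+1))) := by
            rw [hdF, mul_pow]; ring
      _ = _ := by rw [e1, e2]
    have c1 : coeff n (X^m * Ei^(j+1)) = coeff (j+1) (Ei^(j+1)) := by
      rw [show n = (j+1) + m from by omega]; exact coeff_X_pow_mul _ m (j+1)
    have c2 : coeff n (X^(m+1) * (d⁄dX ℚ E * Ei^(j+2))) = coeff j (d⁄dX ℚ E * Ei^(j+2)) := by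
      rw [show n = j + (m+1) from by omega]; exact coeff_X_pow_mul _ (m+1) j
    rw [key, map_add, c1, c2, if_neg (by omega)]
    exact res_lemma E Ei h j

lemma trunc_mul_dvd (n : ℕ) (g : ℚ⟦X⟧) (vp : Polynomial ℚ)
    (h : g * (vp : ℚ⟦X⟧)^(n+1) = 1) :
    ∃ P₂ : Polynomial ℚ,
      (trunc (n+1) g) * vp^(n+1) = 1 + Polynomial.X^(n+1) * P₂ := by
  have hdvd : (X : ℚ⟦X⟧)^(n+1) ∣ (((trunc (n+1) g : Polynomial ℚ) : ℚ⟦X⟧) - g) := by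
    rw [X_pow_dvd_iff]
    intro m hm
    rw [map_sub, Polynomial.coeff_coe, coeff_trunc, if_pos hm, sub_self]
  obtain ⟨c, hc⟩ := hdvd
  have hdvd2 : (Polynomial.X : Polynomial ℚ)^(n+1) ∣ ((trunc (n+1) g) * vp^(n+1) - 1) := by
    rw [Polynomial.X_pow_dvd_iff]
    intro m hm
    have e : ((((trunc (n+1) g) * vp^(n+1) - 1 : Polynomial ℚ)) : ℚ⟦X⟧)
        = (((trunc (n+1) g : Polynomial ℚ) : ℚ⟦X⟧) - g) * ((vp : ℚ⟦X⟧))^(n+1) := by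
      push_cast
      linear_combination h
    have e2 : (PowerSeries.coeff m) ((((trunc (n+1) g) * vp^(n+1) - 1 : Polynomial ℚ)) : ℚ⟦X⟧) = 0 := by
      rw [e, hc, mul_assoc, coeff_X_pow_mul', if_neg (by omega)]
    rwa [Polynomial.coeff_coe] at e2
  obtain ⟨P₂, hP₂⟩ := hdvd2
  exact ⟨P₂, by linear_combination hP₂⟩

theorem main_test (r : ℕ) (d : Fin r → ℕ)
    (hd2 : ∀ i, 2 ≤ d i) (a : ℕ → ℚ)
    (hinv : (PowerSeries.mk fun m => if m = 0 then 0 else a (m - 1) : ℚ⟦X⟧)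
      - ∑ i : Fin r, (PowerSeries.mk fun m => if m = 0 then 0 else a (m - 1) : ℚ⟦X⟧) ^ (d i) = X)
    (n : ℕ) :
    a n * ((n:ℚ)+1) = ∑ k ∈ Finset.range (n+1), ((n+k).choose k : ℚ) *
      (PowerSeries.coeff n ((∑ i : Fin r, (X:ℚ⟦X⟧)^(d i - 1))^k)) := by
  set F : ℚ⟦X⟧ := PowerSeries.mk fun m => if m = 0 then 0 else a (m - 1) with hFdef
  set E : ℚ⟦X⟧ := PowerSeries.mk a with hEdef
  have hF : F = X * E := by
    ext k
    cases k with
    | zero => simp [hFdef, hEdef]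
    | succ k => simp [hFdef, hEdef, coeff_succ_X_mul]
  set VF : ℚ⟦X⟧ := 1 - ∑ i, F ^ (d i - 1) with hVFdef
  have hFV : F * VF = X := by
    have hp : ∀ i : Fin r, F ^ (d i) = F * F ^ (d i - 1) := by
      intro i
      conv_lhs => rw [show d i = 1 + (d i - 1) by have := hd2 i; omega]
      rw [pow_add, pow_one]
    rw [hVFdef, mul_sub, mul_one, ← hinv, Finset.mul_sum]
    congr 1
    exact Finset.sum_congr rfl fun i _ => (hp i).symm
  have hEV : E * VF = 1 := by
    have hX : (X : ℚ⟦X⟧) * (E * VF) = X * 1 := by rw [mul_one, ← mul_assoc, ← hF, hFV]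
    exact mul_left_cancel₀ X_ne_zero hX
  have hE0 : constantCoeff E ≠ 0 := by
    intro h0
    have := congrArg (constantCoeff) hEV
    rw [map_mul, h0, zero_mul] at this
    simp at this
  set Ei : ℚ⟦X⟧ := E⁻¹ with hEidef
  have hEEi : E * Ei = 1 := PowerSeries.mul_inv_cancel E hE0
  -- power series V, W
  set u : ℚ⟦X⟧ := ∑ i, X^(d i - 1) with hudef
  set V : ℚ⟦X⟧ := 1 - u with hVdef
  have hV0 : constantCoeff V ≠ 0 := by
    have : constantCoeff V = 1 := by
      rw [hVdef, map_sub, map_one, hudef, map_sum]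
      have : ∀ i : Fin r, constantCoeff ((X:ℚ⟦X⟧)^(d i - 1)) = 0 := by
        intro i
        rw [map_pow, constantCoeff_X, zero_pow (by have := hd2 i; omega)]
      rw [Finset.sum_congr rfl fun i _ => this i]
      simp
    rw [this]; norm_num
  set W : ℚ⟦X⟧ := V⁻¹ with hWdef
  have hVW : V * W = 1 := PowerSeries.mul_inv_cancel V hV0
  -- polynomial vP
  set vP : Polynomial ℚ := 1 - ∑ i, Polynomial.X ^ (d i - 1) with hvPdef
  have hvPF : Polynomial.aeval F vP = VF := by
    rw [hvPdef, map_sub, map_one, map_sum]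
    congr 1
    exact Finset.sum_congr rfl fun i _ => by rw [map_pow, Polynomial.aeval_X]
  have hvPcoe : ((vP : Polynomial ℚ) : ℚ⟦X⟧) = V := by
    rw [hvPdef, hVdef, hudef]
    push_cast
    congr 1
    rw [← Polynomial.coeToPowerSeries.ringHom_apply, map_sum]
    exact Finset.sum_congr rfl fun i _ => by
      rw [Polynomial.coeToPowerSeries.ringHom_apply]
      rw [Polynomial.coe_pow, Polynomial.coe_X]
  -- Claim 1
  have hWvp : W^(n+1) * ((vP : Polynomial ℚ) : ℚ⟦X⟧)^(n+1) = 1 := by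
    rw [hvPcoe, ← mul_pow, mul_comm W V, hVW, one_pow]
  obtain ⟨P₂, hP₂⟩ := trunc_mul_dvd n (W^(n+1)) vP hWvp
  have hmain : Polynomial.aeval F (trunc (n+1) (W^(n+1))) * VF^(n+1)
      = 1 + F^(n+1) * Polynomial.aeval F P₂ := by
    have h2 := congrArg (Polynomial.aeval F) hP₂
    rwa [map_mul, map_pow (Polynomial.aeval F) vP (n+1), hvPF, map_add, map_one, map_mul, map_pow (Polynomial.aeval F) Polynomial.X (n+1), Polynomial.aeval_X] at h2
  set tA : ℚ⟦X⟧ := Polynomial.aeval F (trunc (n+1) (W^(n+1))) with htA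
  have htA2 : tA = E^(n+1) + F^(n+1) * Polynomial.aeval F P₂ * E^(n+1) := by
    calc tA = tA * ((E*VF)^(n+1)) := by rw [hEV, one_pow, mul_one]
    _ = (tA * VF^(n+1)) * E^(n+1) := by rw [mul_pow]; ring
    _ = (1 + F^(n+1) * Polynomial.aeval F P₂) * E^(n+1) := by rw [hmain]
    _ = _ := by ring
  have hFpow : F^(n+1) = X^(n+1) * E^(n+1) := by rw [hF, mul_pow]
  have h1 : E^(n+1) * Ei^(n+1) = 1 := by rw [← mul_pow, hEEi, one_pow]
  have hright : coeff n (tA * Ei^(n+1) * d⁄dX ℚ F) = a n * ((n:ℚ)+1) := by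
    have e : tA * Ei^(n+1) * d⁄dX ℚ F
        = d⁄dX ℚ F + X^(n+1) * (E^(n+1) * (Polynomial.aeval F P₂ * d⁄dX ℚ F)) := by
      calc tA * Ei^(n+1) * d⁄dX ℚ F
          = (E^(n+1) * Ei^(n+1)) * d⁄dX ℚ F
            + F^(n+1) * (Polynomial.aeval F P₂ * ((E^(n+1) * Ei^(n+1)) * d⁄dX ℚ F)) := by
            rw [htA2]; ring
      _ = _ := by rw [h1, hFpow]; ring
    rw [e, map_add, coeff_X_pow_mul', if_neg (by omega), add_zero, coeff_derivative]
    have : coeff (n+1) F = a n := by simp [hFdef]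
    rw [this]
  have hleft : coeff n (tA * Ei^(n+1) * d⁄dX ℚ F) = coeff n (W^(n+1)) := by
    have hexp : tA = ∑ m ∈ Finset.range (n+1),
        (Polynomial.coeff (trunc (n+1) (W^(n+1))) m) • F^m :=
      Polynomial.aeval_eq_sum_range' (natDegree_trunc_lt _ n) F
    have e : tA * Ei^(n+1) * d⁄dX ℚ F
        = ∑ m ∈ Finset.range (n+1),
            (Polynomial.coeff (trunc (n+1) (W^(n+1))) m) • (F^m * Ei^(n+1) * d⁄dX ℚ F) := by
      rw [hexp, Finset.sum_mul, Finset.sum_mul]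
      exact Finset.sum_congr rfl fun m _ => by rw [smul_mul_assoc, smul_mul_assoc]
    rw [e, map_sum]
    have e2 : ∀ m ∈ Finset.range (n+1),
        coeff n ((Polynomial.coeff (trunc (n+1) (W^(n+1))) m) • (F^m * Ei^(n+1) * d⁄dX ℚ F))
        = (Polynomial.coeff (trunc (n+1) (W^(n+1))) m) * (if m = n then 1 else 0) := by
      intro m hm
      rw [map_smul, smul_eq_mul, hF, stepA E Ei hEEi n m (Finset.mem_range_succ_iff.mp hm)]
    rw [Finset.sum_congr rfl e2]
    simp only [mul_ite, mul_one, mul_zero]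
    rw [Finset.sum_ite_eq' (Finset.range (n+1)) n, if_pos (Finset.self_mem_range_succ n),
      coeff_trunc, if_pos (by omega)]
  have hq : a n * ((n:ℚ)+1) = coeff n (W^(n+1)) := by rw [← hright, hleft]
  -- Claim 2
  set mkC : ℚ⟦X⟧ := PowerSeries.mk (fun k => ((n+k).choose k : ℚ)) with hmkC
  have hgeo : mkC * ((1 - Polynomial.X : Polynomial ℚ) : ℚ⟦X⟧)^(n+1) = 1 := by
    have hco : ((1 - Polynomial.X : Polynomial ℚ) : ℚ⟦X⟧) = 1 - X := by
      rw [Polynomial.coe_sub, Polynomial.coe_one, Polynomial.coe_X]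
    rw [hco, mul_comm]
    exact geo_pow n
  obtain ⟨P₃, hP₃⟩ := trunc_mul_dvd n mkC (1 - Polynomial.X) hgeo
  have hmain2 : Polynomial.aeval u (trunc (n+1) mkC) * V^(n+1)
      = 1 + u^(n+1) * Polynomial.aeval u P₃ := by
    have h2 := congrArg (Polynomial.aeval u) hP₃
    rwa [map_mul, map_pow, map_sub, map_one, Polynomial.aeval_X, ← hVdef,
      map_add, map_one, map_mul, map_pow, Polynomial.aeval_X] at h2
  set tB : ℚ⟦X⟧ := Polynomial.aeval u (trunc (n+1) mkC) with htB
  have htB2 : tB = W^(n+1) + u^(n+1) * Polynomial.aeval u P₃ * W^(n+1) := by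
    calc tB = tB * ((V*W)^(n+1)) := by rw [hVW, one_pow, mul_one]
    _ = (tB * V^(n+1)) * W^(n+1) := by rw [mul_pow]; ring
    _ = (1 + u^(n+1) * Polynomial.aeval u P₃) * W^(n+1) := by rw [hmain2]
    _ = _ := by ring
  have hu0 : constantCoeff u = 0 := by
    rw [hudef, map_sum]
    have h3 : ∀ i : Fin r, constantCoeff ((X:ℚ⟦X⟧)^(d i - 1)) = 0 := by
      intro i
      rw [map_pow, constantCoeff_X, zero_pow (by have := hd2 i; omega)]
    rw [Finset.sum_congr rfl fun i _ => h3 i]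
    simp
  obtain ⟨u₀, hu₀⟩ := X_dvd_iff.mpr hu0
  have hcoeffB : coeff n tB = coeff n (W^(n+1)) := by
    have e : u^(n+1) * Polynomial.aeval u P₃ * W^(n+1)
        = X^(n+1) * (u₀^(n+1) * (Polynomial.aeval u P₃ * W^(n+1))) := by
      rw [hu₀, mul_pow]; ring
    rw [htB2, map_add, e, coeff_X_pow_mul', if_neg (by omega), add_zero]
  have hsum : coeff n tB = ∑ k ∈ Finset.range (n+1), ((n+k).choose k : ℚ) * coeff n (u^k) := by
    rw [htB, Polynomial.aeval_eq_sum_range' (natDegree_trunc_lt _ n), map_sum]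
    refine Finset.sum_congr rfl fun k hk => ?_
    rw [map_smul, smul_eq_mul, coeff_trunc, if_pos (Finset.mem_range.mp hk), hmkC, coeff_mk]
  rw [hq, ← hcoeffB, hsum]

lemma coeff_u_pow (r n k : ℕ) (d : Fin r → ℕ) :
    coeff n ((∑ i : Fin r, (X:ℚ⟦X⟧)^(d i - 1))^k)
      = ∑ v ∈ Finset.piAntidiag Finset.univ k,
          (if ∑ i, (d i - 1) * v i = n then ((Nat.multinomial Finset.univ v : ℕ) : ℚ) else 0) := by
  rw [Finset.sum_pow_eq_sum_piAntidiag, map_sum]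
  refine Finset.sum_congr rfl fun v hv => ?_
  have e : ∏ i, ((X:ℚ⟦X⟧)^(d i - 1))^(v i) = X^(∑ i, (d i - 1) * v i) := by
    rw [← Finset.prod_pow_eq_pow_sum]
    exact Finset.prod_congr rfl fun i _ => by rw [← pow_mul]
  rw [e]
  have e3 : ((Nat.multinomial Finset.univ v : ℕ) : ℚ⟦X⟧)
      = C ((Nat.multinomial Finset.univ v : ℕ) : ℚ) := (map_natCast (C (R := ℚ)) _).symm
  rw [e3, coeff_C_mul, coeff_X_pow]
  by_cases h : ∑ i, (d i - 1) * v i = n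
  · rw [if_pos h, if_pos h.symm, mul_one]
  · rw [if_neg h, if_neg fun hh => h hh.symm, mul_zero]


/-- Polygonal partitions: let `2 ≤ d_1 < d_2 < ⋯ < d_r` and let
`z = ∑_{n≥0} a_n x^{n+1}` be the compositional inverse of
`x = z - ∑_i z^{d_i}` (i.e. `F - ∑_i F^{d_i} = X`).  Then
`a_n = ∑_λ (1/(n+1)) C(n+k,k) ⬝ multinomial(k; k_{d_1-1},…,k_{d_r-1})`,
summed over tuples with `∑_i (d_i - 1) k_{d_i-1} = n` and `k = ∑_i k_{d_i-1}`. -/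
theorem reverse_series_counts_dissections (r : ℕ) (d : Fin r → ℕ)
    (hd2 : ∀ i, 2 ≤ d i) (hmono : StrictMono d) (a : ℕ → ℚ)
    (hinv : coeffSeries a - ∑ i : Fin r, (coeffSeries a) ^ (d i) = X) :
    ∀ n : ℕ, a n =
      ∑ v ∈ (Fintype.piFinset fun _ : Fin r => Finset.range (n + 1)).filter
          (fun v => ∑ i, (d i - 1) * v i = n),
        (1 / ((n : ℚ) + 1)) * (((n + ∑ i, v i).choose (∑ i, v i) : ℕ) : ℚ) *
          ((Nat.multinomial Finset.univ v : ℕ) : ℚ) := by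
  intro n
  have hmt := main_test r d hd2 a hinv n
  have hmt2 : a n * ((n:ℚ)+1) = ∑ k ∈ Finset.range (n+1),
      ∑ v ∈ Finset.piAntidiag Finset.univ k,
        (if ∑ i, (d i - 1) * v i = n
          then ((n+k).choose k : ℚ) * ((Nat.multinomial Finset.univ v : ℕ) : ℚ) else 0) := by
    rw [hmt]
    refine Finset.sum_congr rfl fun k _ => ?_
    rw [coeff_u_pow r n k d, Finset.mul_sum]
    exact Finset.sum_congr rfl fun v _ => by rw [mul_ite, mul_zero]
  set A := (Fintype.piFinset fun _ : Fin r => Finset.range (n + 1)).filter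
      (fun v => ∑ i, (d i - 1) * v i = n) with hA
  have hmaps : ∀ v ∈ A, (∑ i, v i) ∈ Finset.range (n+1) := by
    intro v hv
    rw [hA, Finset.mem_filter] at hv
    obtain ⟨-, hcond⟩ := hv
    rw [Finset.mem_range]
    have h4 : ∑ i, v i ≤ ∑ i, (d i - 1) * v i :=
      Finset.sum_le_sum fun i _ => Nat.le_mul_of_pos_left _ (by have := hd2 i; omega)
    omega
  have hfib := Finset.sum_fiberwise_of_maps_to hmaps
    (fun v => (((n + ∑ i, v i).choose (∑ i, v i) : ℕ) : ℚ) * ((Nat.multinomial Finset.univ v : ℕ) : ℚ))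
  have hinner : ∀ k ∈ Finset.range (n+1),
      (∑ v ∈ Finset.piAntidiag Finset.univ k,
        (if ∑ i, (d i - 1) * v i = n
          then ((n+k).choose k : ℚ) * ((Nat.multinomial Finset.univ v : ℕ) : ℚ) else 0))
      = ∑ v ∈ A.filter (fun v => ∑ i, v i = k),
          (((n + ∑ i, v i).choose (∑ i, v i) : ℕ) : ℚ) * ((Nat.multinomial Finset.univ v : ℕ) : ℚ) := by
    intro k hk
    have hsets : (Finset.piAntidiag Finset.univ k).filter (fun v => ∑ i, (d i - 1) * v i = n)
        = A.filter (fun v => ∑ i, v i = k) := by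
      ext v
      simp only [hA, Finset.mem_filter, Finset.mem_piAntidiag, Fintype.mem_piFinset,
        Finset.mem_range, Finset.mem_univ, ne_eq]
      constructor
      · rintro ⟨⟨hsum, -⟩, hcond⟩
        refine ⟨⟨fun i => ?_, hcond⟩, hsum⟩
        have h1 : (d i - 1) * v i ≤ ∑ j, (d j - 1) * v j :=
          Finset.single_le_sum (f := fun j => (d j - 1) * v j)
            (fun j _ => Nat.zero_le _) (Finset.mem_univ i)
        have h2 : v i ≤ (d i - 1) * v i := Nat.le_mul_of_pos_left _ (by have := hd2 i; omega)
        omega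
      · rintro ⟨⟨hvlt, hcond⟩, hsum⟩
        exact ⟨⟨hsum, fun _ _ => trivial⟩, hcond⟩
    rw [← Finset.sum_filter, hsets]
    refine Finset.sum_congr rfl fun v hv => ?_
    have hvk : ∑ i, v i = k := (Finset.mem_filter.mp hv).2
    rw [hvk]
  have hS : a n * ((n:ℚ)+1)
      = ∑ v ∈ A, (((n + ∑ i, v i).choose (∑ i, v i) : ℕ) : ℚ)
          * ((Nat.multinomial Finset.univ v : ℕ) : ℚ) := by
    rw [hmt2, ← hfib]
    exact Finset.sum_congr rfl hinner
  have hne : ((n:ℚ)+1) ≠ 0 := by positivity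
  have ha : a n = (∑ v ∈ A, (((n + ∑ i, v i).choose (∑ i, v i) : ℕ) : ℚ)
      * ((Nat.multinomial Finset.univ v : ℕ) : ℚ)) * (1/((n:ℚ)+1)) := by
    rw [← hS]
    field_simp
  rw [ha, Finset.sum_mul]
  exact Finset.sum_congr rfl fun v _ => by ring
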